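/- Let u ∈ L²([0,1], ℝ) and define c₁ := 12·(s₀ + v₀ − s_f + ∫₀¹ (1 − τ)·u(τ) dτ) − 6·(v₀ − v_f + ∫₀¹ u(τ) dτ) and c₂ := −6·(s₀ + v₀ − s_f + ∫₀¹ (1 − τ)·u(τ) dτ) + 2·(v₀ − v_f + ∫₀¹ u(τ) dτ). Then the function w defined by w(t) := u(t) + c₁·t + c₂ belongs to 𝒜 and is the metric projection of u onto 𝒜; that is, ‖u − w‖ ≤ ‖u − z‖ for every z ∈ 𝒜. -/

import Mathlib

open MeasureTheory

/-- The measure on ℝ representing integration over the interval [0,1]. -/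
noncomputable def mu01 : Measure ℝ := volume.restrict (Set.Icc 0 1)

/-- The affine set 𝒜 of controls in L²([0,1],ℝ) steering the double integrator
from (s₀, v₀) to (s_f, v_f). -/
def setA (s0 sf v0 vf : ℝ) : Set (Lp ℝ 2 mu01) :=
  {u | (∫ t, u t ∂mu01) = vf - v0 ∧ (∫ t, (1 - t) * u t ∂mu01) = sf - s0 - v0}

/-- The box ℬ of controls bounded in absolute value by `a` a.e. on [0,1]. -/
def setB (a : ℝ) : Set (Lp ℝ 2 mu01) :=
  {u | ∀ᵐ t ∂mu01, |u t| ≤ a}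

instance : IsFiniteMeasure mu01 := ⟨by simp [mu01, Real.volume_Icc]⟩

lemma ae_mem01 : ∀ᵐ t ∂mu01, t ∈ Set.Icc (0:ℝ) 1 :=
  ae_restrict_mem measurableSet_Icc

lemma int_lin (a b : ℝ) : ∫ t, (a*t+b) ∂mu01 = a/2 + b := by
  unfold mu01
  rw [MeasureTheory.integral_Icc_eq_integral_Ioc,
    ← intervalIntegral.integral_of_le (zero_le_one)]
  have h1 : IntervalIntegrable (fun t : ℝ => a*t) volume 0 1 :=
    (continuous_const.mul continuous_id).intervalIntegrable _ _
  have h2 : IntervalIntegrable (fun _ : ℝ => b) volume 0 1 :=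
    intervalIntegrable_const
  rw [intervalIntegral.integral_add h1 h2, intervalIntegral.integral_const_mul,
    integral_id, intervalIntegral.integral_const]
  norm_num; ring

lemma int_onesub_lin (a b : ℝ) : ∫ t, (1-t)*(a*t+b) ∂mu01 = a/6 + b/2 := by
  have h : ∀ t : ℝ, (1-t)*(a*t+b) = -a*t^2 + ((a-b)*t + b) := by intro t; ring
  simp_rw [h]
  unfold mu01
  rw [MeasureTheory.integral_Icc_eq_integral_Ioc,
    ← intervalIntegral.integral_of_le (zero_le_one)]
  have h1 : IntervalIntegrable (fun t : ℝ => -a*t^2) volume 0 1 :=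
    (continuous_const.mul (continuous_pow 2)).intervalIntegrable _ _
  have h2 : IntervalIntegrable (fun t : ℝ => (a-b)*t) volume 0 1 :=
    (continuous_const.mul continuous_id).intervalIntegrable _ _
  have h3 : IntervalIntegrable (fun _ : ℝ => b) volume 0 1 :=
    intervalIntegrable_const
  rw [intervalIntegral.integral_add h1 (h2.add h3), intervalIntegral.integral_add h2 h3,
    intervalIntegral.integral_const_mul, intervalIntegral.integral_const_mul,
    integral_pow, integral_id, intervalIntegral.integral_const]
  norm_num; ring

lemma memLp_lin (a b : ℝ) : MemLp (fun t => a*t+b) 2 mu01 := by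
  apply MemLp.of_bound ((continuous_const.mul continuous_id).add continuous_const).aestronglyMeasurable (|a| + |b|)
  filter_upwards [ae_mem01] with t ht
  obtain ⟨h0, h1⟩ := ht
  have : |a * t| ≤ |a| := by
    rw [abs_mul]
    calc |a| * |t| ≤ |a| * 1 := by
          apply mul_le_mul_of_nonneg_left _ (abs_nonneg a)
          rw [abs_le]; constructor <;> linarith
      _ = |a| := mul_one _
  calc ‖a * t + b‖ ≤ |a * t| + |b| := abs_add_le _ _
    _ ≤ |a| + |b| := by linarith

lemma integrable_onesub_mul {g : ℝ → ℝ} (hg : Integrable g mu01) :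
    Integrable (fun t => (1-t) * g t) mu01 := by
  apply hg.bdd_mul (c := 1)
    ((continuous_const.sub continuous_id).aestronglyMeasurable)
  filter_upwards [ae_mem01] with t ht
  obtain ⟨h0, h1⟩ := ht
  rw [Real.norm_eq_abs]
  simp only [Pi.sub_apply, id_eq]
  rw [abs_le]; constructor <;> linarith

/-- Projection onto 𝒜: the function w(t) = u(t) + c₁·t + c₂, with c₁ and c₂ given by
the stated integral formulas, belongs to 𝒜 and is the metric projection of u onto 𝒜. -/
theorem stmt_15 (s0 sf v0 vf : ℝ) (u : Lp ℝ 2 mu01) (c1 c2 : ℝ)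
    (hc1 : c1 = 12 * (s0 + v0 - sf + ∫ t, (1 - t) * u t ∂mu01)
        - 6 * (v0 - vf + ∫ t, u t ∂mu01))
    (hc2 : c2 = -6 * (s0 + v0 - sf + ∫ t, (1 - t) * u t ∂mu01)
        + 2 * (v0 - vf + ∫ t, u t ∂mu01)) :
    ∃ w : Lp ℝ 2 mu01,
      (∀ᵐ t ∂mu01, w t = u t + c1 * t + c2) ∧
      w ∈ setA s0 sf v0 vf ∧
      ∀ z ∈ setA s0 sf v0 vf, ‖u - w‖ ≤ ‖u - z‖ := by
  have hf : MemLp (fun t => c1*t + c2) 2 mu01 := memLp_lin c1 c2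
  set w : Lp ℝ 2 mu01 := u + hf.toLp _ with hwdef
  have hwae : ∀ᵐ t ∂mu01, w t = u t + c1 * t + c2 := by
    filter_upwards [Lp.coeFn_add u (hf.toLp _), hf.coeFn_toLp] with t h1 h2
    rw [hwdef, h1, Pi.add_apply, h2]; ring
  -- integrability facts
  have hu_int : Integrable (fun t => u t) mu01 := (Lp.memLp u).integrable one_le_two
  have hw_int : Integrable (fun t => w t) mu01 := (Lp.memLp w).integrable one_le_two
  have hf_int : Integrable (fun t => c1*t + c2) mu01 := hf.integrable one_le_two
  -- integrals of w
  have hIw : (∫ t, w t ∂mu01) = (∫ t, u t ∂mu01) + (c1/2 + c2) := by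
    rw [integral_congr_ae (g := fun t => u t + (c1 * t + c2))
      (by filter_upwards [hwae] with t ht; rw [ht]; ring),
      integral_add hu_int hf_int, int_lin]
  have hIw1 : (∫ t, (1-t) * w t ∂mu01)
      = (∫ t, (1-t) * u t ∂mu01) + (c1/6 + c2/2) := by
    rw [integral_congr_ae (g := fun t => (1-t) * u t + (1-t) * (c1 * t + c2))
      (by filter_upwards [hwae] with t ht; rw [ht]; ring),
      integral_add (integrable_onesub_mul hu_int) (integrable_onesub_mul hf_int),
      int_onesub_lin]
  have hwA : w ∈ setA s0 sf v0 vf := by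
    constructor
    · rw [hIw]; rw [hc1, hc2]; ring
    · rw [hIw1]; rw [hc1, hc2]; ring
  refine ⟨w, hwae, hwA, fun z hz => ?_⟩
  obtain ⟨hz1, hz2⟩ := hz
  have hz_int : Integrable (fun t => z t) mu01 := (Lp.memLp z).integrable one_le_two
  -- g = w - z has zero moments
  have hgae : ∀ᵐ t ∂mu01, (w - z) t = w t - z t := Lp.coeFn_sub w z
  have hg_int : Integrable (fun t => (w - z) t) mu01 :=
    (Lp.memLp (w - z)).integrable one_le_two
  have hg0 : (∫ t, (w - z) t ∂mu01) = 0 := by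
    rw [integral_congr_ae (g := fun t => w t - z t) hgae,
      integral_sub hw_int hz_int, hwA.1, hz1]
    ring
  have hg1 : (∫ t, (1-t) * (w - z) t ∂mu01) = 0 := by
    rw [integral_congr_ae (g := fun t => (1-t) * w t - (1-t) * z t)
      (by filter_upwards [hgae] with t ht; rw [ht]; ring),
      integral_sub (integrable_onesub_mul hw_int) (integrable_onesub_mul hz_int),
      hwA.2, hz2]
    ring
  -- orthogonality
  have huw : ∀ᵐ t ∂mu01, (u - w) t = -(c1 * t + c2) := by
    filter_upwards [Lp.coeFn_sub u w, hwae] with t h1 h2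
    rw [h1, Pi.sub_apply, h2]; ring
  have hinner : (inner ℝ (u - w) (w - z) : ℝ) = 0 := by
    rw [L2.inner_def]
    rw [integral_congr_ae (g := fun t => c1 * ((1-t) * (w - z) t) + (-c1 - c2) * (w - z) t)
      ?_]
    · rw [integral_add ((integrable_onesub_mul hg_int).const_mul c1) (hg_int.const_mul _),
        integral_const_mul, integral_const_mul, hg0, hg1]
      ring
    · filter_upwards [huw, hgae] with t h1 h2
      simp only [RCLike.inner_apply, conj_trivial]
      rw [h1]; ring
  have key : ‖u - w‖ ^ 2 ≤ ‖u - z‖ ^ 2 := by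
    have : u - z = (u - w) + (w - z) := by abel
    rw [this, norm_add_sq_real, hinner]
    nlinarith [sq_nonneg ‖w - z‖]
  exact (pow_le_pow_iff_left₀ (norm_nonneg (u - w)) (norm_nonneg (u - z)) two_ne_zero).mp key
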